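/- Let λ and μ be partitions with ℓ(λ) ≤ K and ℓ(μ) ≤ K, and let x be a complex number such that all factors below are defined and nonzero. Then ∏_{(i,j)∈λ} (λ'_j + μ_i − i − j + 1 + x) = ∏_{i=1}^{K} [Γ(m_i + K + 1 + x)/Γ(m_i − l_i + x)] · ∏_{1≤i≤j≤K} 1/(m_i − l_j + x), where l_i = λ_i − i and m_i = μ_i − i. -/

import Mathlib

open Finset

lemma conj_ge {K : ℕ} {lam : ℕ → ℕ}
    (hmono : ∀ i j, 1 ≤ i → i ≤ j → lam j ≤ lam i)
    {j t : ℕ} (htK : t ≤ K) (h : j ≤ lam t) :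
    t ≤ ((Icc 1 K).filter fun s => j ≤ lam s).card := by
  have : Icc 1 t ⊆ (Icc 1 K).filter fun s => j ≤ lam s := by
    intro s hs
    simp only [mem_Icc] at hs
    simp only [mem_filter, mem_Icc]
    exact ⟨⟨hs.1, hs.2.trans htK⟩, h.trans (hmono s t hs.1 hs.2)⟩
  simpa using Finset.card_le_card this

lemma conj_lt {K : ℕ} {lam : ℕ → ℕ}
    (hmono : ∀ i j, 1 ≤ i → i ≤ j → lam j ≤ lam i)
    {j t : ℕ} (ht1 : 1 ≤ t) (h : lam t < j) :
    ((Icc 1 K).filter fun s => j ≤ lam s).card < t := by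
  have : (Icc 1 K).filter (fun s => j ≤ lam s) ⊆ Ico 1 t := by
    intro s hs
    simp only [mem_filter, mem_Icc] at hs
    simp only [mem_Ico]
    refine ⟨hs.1.1, ?_⟩
    by_contra hst
    push_neg at hst
    exact absurd (hs.2.trans (hmono t s ht1 hst)) (by omega)
  have := Finset.card_le_card this
  simp [Nat.card_Ico] at this
  omega

lemma conj_le_K {K : ℕ} {lam : ℕ → ℕ} (j : ℕ) :
    ((Icc 1 K).filter fun s => j ≤ lam s).card ≤ K := by
  simpa using Finset.card_le_card (filter_subset _ (Icc 1 K))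

/-- Disjointness of the two image sets. -/
lemma key_disjoint {K i : ℕ} {lam : ℕ → ℕ}
    (hmono : ∀ i j, 1 ≤ i → i ≤ j → lam j ≤ lam i)
    (hi1 : 1 ≤ i) :
    Disjoint
      ((Icc 1 (lam i)).image (fun j =>
        ((((Icc 1 K).filter fun t => j ≤ lam t).card : ℤ) - j + 1)))
      ((Icc i K).image (fun (t : ℕ) => (t : ℤ) - lam t)) := by
  rw [Finset.disjoint_left]
  rintro a ha hb
  simp only [mem_image, mem_Icc] at ha hb
  obtain ⟨j, ⟨hj1, hji⟩, hja⟩ := ha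
  obtain ⟨t, ⟨hti, htK⟩, hta⟩ := hb
  have ht1 : 1 ≤ t := hi1.trans hti
  rcases le_or_gt j (lam t) with h | h
  · have := conj_ge hmono htK h
    omega
  · have := conj_lt (K := K) hmono ht1 h
    omega

/-- Coverage: the union is the whole interval. -/
lemma key_union {K i : ℕ} {lam : ℕ → ℕ}
    (hmono : ∀ i j, 1 ≤ i → i ≤ j → lam j ≤ lam i)
    (hlen : ∀ i, K < i → lam i = 0)
    (hi1 : 1 ≤ i) (hiK : i ≤ K) :
    ((Icc 1 (lam i)).image (fun j =>
        ((((Icc 1 K).filter fun t => j ≤ lam t).card : ℤ) - j + 1)))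
      ∪ ((Icc i K).image (fun (t : ℕ) => (t : ℤ) - lam t))
    = Finset.Icc ((i : ℤ) - lam i) (K : ℤ) := by
  apply Finset.Subset.antisymm
  · intro a ha
    simp only [mem_union, mem_image, mem_Icc] at ha ⊢
    rcases ha with ⟨j, ⟨hj1, hji⟩, hja⟩ | ⟨t, ⟨hti, htK⟩, hta⟩
    · have h1 := conj_ge hmono hiK (hji)
      have h2 := conj_le_K (K := K) (lam := lam) j
      omega
    · have := hmono i t hi1 hti
      omega
  · intro b hb
    simp only [mem_Icc] at hb
    simp only [mem_union, mem_image, mem_Icc]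
    by_cases hB : ∃ t : ℕ, (i ≤ t ∧ t ≤ K) ∧ (t : ℤ) - lam t = b
    · exact Or.inr hB
    push_neg at hB
    left
    -- t₀ : largest t in [i,K] with t - lam t ≤ b
    set S := (Icc i K).filter (fun (t : ℕ) => (t : ℤ) - lam t ≤ b) with hS
    have hiS : i ∈ S := by
      simp only [hS, mem_filter, mem_Icc]
      exact ⟨⟨le_refl i, hiK⟩, hb.1⟩
    have hSne : S.Nonempty := ⟨i, hiS⟩
    set t0 := S.max' hSne with ht0
    have ht0S : t0 ∈ S := S.max'_mem hSne
    simp only [hS, mem_filter, mem_Icc] at ht0S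
    obtain ⟨⟨hit0, ht0K⟩, ht0b⟩ := ht0S
    have ht0b' : (t0 : ℤ) - lam t0 < b := by
      rcases lt_or_eq_of_le ht0b with h | h
      · exact h
      · exact absurd h (hB t0 ⟨hit0, ht0K⟩)
    have hnext : b < ((t0 : ℤ) + 1) - lam (t0 + 1) := by
      rcases eq_or_lt_of_le ht0K with h | h
      · -- t0 = K
        have : lam (K + 1) = 0 := hlen (K + 1) (by omega)
        rw [h, this]
        push_cast
        omega
      · -- t0 < K : maximality
        by_contra hc
        push_neg at hc
        have : t0 + 1 ∈ S := by
          simp only [hS, mem_filter, mem_Icc]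
          exact ⟨⟨by omega, by omega⟩, by push_cast; push_cast at hc; omega⟩
        have := S.le_max' _ this
        omega
    -- define j
    have hbt0 : b ≤ (t0 : ℤ) := by
      have : (0 : ℤ) ≤ lam (t0 + 1) := by positivity
      omega
    set j : ℕ := (↑t0 + 1 - b).toNat with hj
    have hjz : (j : ℤ) = (t0 : ℤ) + 1 - b := by
      rw [hj]; omega
    have hj1 : 1 ≤ j := by omega
    have hjlamt0 : j ≤ lam t0 := by omega
    have hjlamt0' : lam (t0 + 1) < j := by omega
    have hji : j ≤ lam i := hjlamt0.trans (hmono i t0 hi1 hit0)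
    refine ⟨j, ⟨hj1, hji⟩, ?_⟩
    -- conj j = t0
    have h1 := conj_ge hmono ht0K hjlamt0
    have h2 := conj_lt (K := K) hmono (by omega : 1 ≤ t0 + 1) hjlamt0'
    omega

lemma Gamma_shift (z : ℂ) (hz : ∀ m : ℤ, z ≠ m) (n : ℕ) :
    Complex.Gamma (z + n) = (∏ k ∈ range n, (z + k)) * Complex.Gamma z := by
  induction n with
  | zero => simp
  | succ n ih =>
    have hne : z + n ≠ 0 := by
      intro h
      apply hz (-(n : ℤ))
      push_cast
      linear_combination h
    have : z + ((n : ℂ) + 1) = (z + n) + 1 := by ring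
    rw [show ((n + 1 : ℕ) : ℂ) = (n : ℂ) + 1 by push_cast; ring, this,
      Complex.Gamma_add_one _ hne, ih, prod_range_succ]
    ring

lemma prod_Icc_int (p q : ℤ) (n : ℕ) (hn : (n : ℤ) = q + 1 - p) (f : ℤ → ℂ) :
    ∏ a ∈ Finset.Icc p q, f a = ∏ k ∈ range n, f (p + k) := by
  refine (Finset.prod_bij (fun (k : ℕ) _ => p + (k : ℤ)) ?_ ?_ ?_ ?_).symm
  · intro k hk
    simp only [mem_range] at hk
    simp only [mem_Icc]
    omega
  · intro a ha b hb h
    simp only [mem_range] at ha hb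
    omega
  · intro a ha
    simp only [mem_Icc] at ha
    exact ⟨(a - p).toNat, by simp only [mem_range]; omega,
      show p + (((a - p).toNat : ℕ) : ℤ) = a by omega⟩
  · intro k hk
    rfl

lemma Gamma_ratio (z : ℂ) (hz : ∀ m : ℤ, z ≠ m) (p q : ℤ) (n : ℕ)
    (hn : (n : ℤ) = q + 1 - p) :
    Complex.Gamma (z + (q + 1 : ℤ)) / Complex.Gamma (z + p)
      = ∏ a ∈ Finset.Icc p q, (z + a) := by
  have hz' : ∀ m : ℤ, z + (p : ℂ) ≠ m := by
    intro m h
    apply hz (m - p)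
    push_cast
    linear_combination h
  have h1 : Complex.Gamma ((z + p) + n) = (∏ k ∈ range n, ((z + p) + k)) * Complex.Gamma (z + p) :=
    Gamma_shift _ hz' n
  have h2 : z + ((q + 1 : ℤ) : ℂ) = (z + p) + n := by
    have : ((q + 1 : ℤ) : ℂ) = (p : ℂ) + (n : ℂ) := by
      have : ((q + 1 : ℤ) : ℂ) = ((p + n : ℤ) : ℂ) := by norm_cast; omega
      rw [this]; push_cast; ring
    rw [this]; ring
  have hGne : Complex.Gamma (z + p) ≠ 0 := by
    apply Complex.Gamma_ne_zero
    intro m h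
    exact hz' (-(m : ℤ)) (by push_cast; exact h)
  rw [h2, h1, mul_div_assoc, div_self hGne, mul_one,
    prod_Icc_int p q n hn (fun a => z + (a : ℂ))]
  apply Finset.prod_congr rfl
  intro k _
  push_cast
  ring

lemma row_lemma {K i : ℕ} {lam : ℕ → ℕ}
    (hmono : ∀ i j, 1 ≤ i → i ≤ j → lam j ≤ lam i)
    (hlen : ∀ i, K < i → lam i = 0)
    (hi1 : 1 ≤ i) (hiK : i ≤ K) (c : ℂ) (hc : ∀ m : ℤ, c ≠ m) :
    ∏ j ∈ Icc 1 (lam i),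
        (c + (((((Icc 1 K).filter fun t => j ≤ lam t).card : ℤ) - j + 1 : ℤ) : ℂ))
      = (Complex.Gamma (c + (((K : ℤ) + 1 : ℤ) : ℂ)) /
          Complex.Gamma (c + (((i : ℤ) - lam i : ℤ) : ℂ))) *
        ∏ t ∈ Icc i K, (c + (((t : ℤ) - lam t : ℤ) : ℂ))⁻¹ := by
  set F : ℕ → ℤ := fun j => ((((Icc 1 K).filter fun t => j ≤ lam t).card : ℤ) - j + 1) with hF
  set G : ℕ → ℤ := fun (t : ℕ) => (t : ℤ) - lam t with hG
  have hconj_anti : ∀ j j' : ℕ, j ≤ j' →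
      (((Icc 1 K).filter fun t => j' ≤ lam t).card : ℕ)
        ≤ ((Icc 1 K).filter fun t => j ≤ lam t).card := by
    intro j j' hjj
    apply Finset.card_le_card
    intro s hs
    simp only [mem_filter] at hs ⊢
    exact ⟨hs.1, hjj.trans hs.2⟩
  have hFinj : ∀ a ∈ Icc 1 (lam i), ∀ b ∈ Icc 1 (lam i), F a = F b → a = b := by
    intro a _ b _ h
    rcases lt_trichotomy a b with hab | hab | hab
    · have := hconj_anti a b hab.le
      simp only [hF] at h
      omega
    · exact hab
    · have := hconj_anti b a hab.le
      simp only [hF] at h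
      omega
  have hGinj : ∀ a ∈ Icc i K, ∀ b ∈ Icc i K, G a = G b → a = b := by
    intro a ha b hb h
    simp only [mem_Icc] at ha hb
    rcases lt_trichotomy a b with hab | hab | hab
    · have := hmono a b (hi1.trans ha.1) hab.le
      simp only [hG] at h
      omega
    · exact hab
    · have := hmono b a (hi1.trans hb.1) hab.le
      simp only [hG] at h
      omega
  have h1 : ∏ a ∈ (Icc 1 (lam i)).image F, (c + (a : ℂ))
      = ∏ j ∈ Icc 1 (lam i), (c + ((F j : ℤ) : ℂ)) := Finset.prod_image hFinj
  have h2 : ∏ a ∈ (Icc i K).image G, (c + (a : ℂ))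
      = ∏ t ∈ Icc i K, (c + ((G t : ℤ) : ℂ)) := Finset.prod_image hGinj
  have hdisj := key_disjoint (K := K) (i := i) (lam := lam) hmono hi1
  have hunion := key_union (K := K) (i := i) (lam := lam) hmono hlen hi1 hiK
  have h3 : (∏ j ∈ Icc 1 (lam i), (c + ((F j : ℤ) : ℂ))) *
        ∏ t ∈ Icc i K, (c + ((G t : ℤ) : ℂ))
      = ∏ a ∈ Finset.Icc ((i : ℤ) - lam i) (K : ℤ), (c + (a : ℂ)) := by
    rw [← h1, ← h2, ← Finset.prod_union hdisj, hunion]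
  have hratio : Complex.Gamma (c + (((K : ℤ) + 1 : ℤ) : ℂ)) /
        Complex.Gamma (c + (((i : ℤ) - lam i : ℤ) : ℂ))
      = ∏ a ∈ Finset.Icc ((i : ℤ) - lam i) (K : ℤ), (c + (a : ℂ)) := by
    have := Gamma_ratio c hc ((i : ℤ) - lam i) (K : ℤ) (K + 1 + lam i - i)
      (by push_cast; omega)
    rw [← this]
  have hBne : ∀ t ∈ Icc i K, (c + ((G t : ℤ) : ℂ)) ≠ 0 := by
    intro t _ h
    apply hc (-(G t))
    push_cast
    linear_combination h
  have hBprod : (∏ t ∈ Icc i K, (c + ((G t : ℤ) : ℂ))) ≠ 0 :=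
    Finset.prod_ne_zero_iff.mpr hBne
  rw [hratio, ← h3, Finset.prod_inv_distrib, mul_assoc, mul_inv_cancel₀ hBprod, mul_one]


/-- Proposition (interaction over one partition): for partitions `λ, μ` of length `≤ K`,
`∏_{(i,j)∈λ} (λ'_j + μ_i − i − j + 1 + x)
 = ∏_{i=1}^{K} Γ(m_i+K+1+x)/Γ(m_i−l_i+x) · ∏_{1≤i≤j≤K} 1/(m_i−l_j+x)`,
where `l_i = λ_i − i`, `m_i = μ_i − i`, and `x` is generic. -/
theorem interaction_product_half (K : ℕ) (hK : 0 < K) (lam mu : ℕ → ℕ)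
    (hlam_mono : ∀ i j, 1 ≤ i → i ≤ j → lam j ≤ lam i)
    (hlam_len : ∀ i, K < i → lam i = 0)
    (hmu_mono : ∀ i j, 1 ≤ i → i ≤ j → mu j ≤ mu i)
    (hmu_len : ∀ i, K < i → mu i = 0)
    (x : ℂ) (hx : ∀ m : ℤ, x ≠ (m : ℂ)) :
    (∏ i ∈ Finset.Icc 1 K, ∏ j ∈ Finset.Icc 1 (lam i),
        (((((Finset.Icc 1 K).filter fun t => j ≤ lam t).card : ℂ)
            + (mu i : ℂ) - (i : ℂ) - (j : ℂ) + 1 + x))) =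
      (∏ i ∈ Finset.Icc 1 K,
          Complex.Gamma (((mu i : ℂ) - (i : ℂ)) + (K : ℂ) + 1 + x) /
            Complex.Gamma (((mu i : ℂ) - (i : ℂ)) - ((lam i : ℂ) - (i : ℂ)) + x)) *
        ∏ i ∈ Finset.Icc 1 K, ∏ j ∈ Finset.Icc i K,
          (1 / (((mu i : ℂ) - (i : ℂ)) - ((lam j : ℂ) - (j : ℂ)) + x)) := by
  rw [← Finset.prod_mul_distrib]
  apply Finset.prod_congr rfl
  intro i hi
  simp only [mem_Icc] at hi
  set c : ℂ := (mu i : ℂ) - i + x with hcdef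
  have hc : ∀ m : ℤ, c ≠ m := by
    intro m h
    apply hx (m - (mu i : ℤ) + i)
    push_cast
    rw [hcdef] at h
    linear_combination h
  have hrow := row_lemma hlam_mono hlam_len hi.1 hi.2 c hc
  have hL : ∏ j ∈ Finset.Icc 1 (lam i),
        (((((Finset.Icc 1 K).filter fun t => j ≤ lam t).card : ℂ)
            + (mu i : ℂ) - (i : ℂ) - (j : ℂ) + 1 + x))
      = ∏ j ∈ Icc 1 (lam i),
        (c + (((((Icc 1 K).filter fun t => j ≤ lam t).card : ℤ) - j + 1 : ℤ) : ℂ)) := by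
    apply Finset.prod_congr rfl
    intro j _
    push_cast
    ring
  rw [hL, hrow]
  congr 1
  · congr 2
    · push_cast; ring
    · push_cast; ring
  · apply Finset.prod_congr rfl
    intro t _
    rw [one_div]
    congr 1
    push_cast
    ring
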